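/- The map from the quadratic F-algebra E = F[X]/(X² − (b/c)·X + (a/c)) to M₂(F) sending the class of x + y·X to M(x,y) is an injective F-algebra homomorphism, and it restricts to a group isomorphism from the unit group E^× onto the similitude group T_𝕊 = {A ∈ M₂(F) : det A ≠ 0 and (transpose A)·𝕊·A = (det A)·𝕊}. -/

import Mathlib

open Matrix Polynomial

set_option maxHeartbeats 2000000

/-- The quadratic algebra `E = F[X]/(X² − (b/c)X + (a/c))` embeds into `M₂(F)` via
`x + yX ↦ M(x,y)`, injectively, and the image of the unit group `E^×` is exactly the
similitude group `T_𝕊` of `𝕊 = !![a, b/2; b/2, c]`. -/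
theorem quadratic_algebra_iso_similitude {F : Type*} [Field F] (h2 : (2 : F) ≠ 0)
    (a b c : F) (hc : c ≠ 0) (hdisc : b ^ 2 - 4 * a * c ≠ 0) :
    ∃ φ : AdjoinRoot (X ^ 2 - Polynomial.C (b / c) * X + Polynomial.C (a / c))
        →ₐ[F] Matrix (Fin 2) (Fin 2) F,
      (∀ x y : F,
        φ (AdjoinRoot.mk (X ^ 2 - Polynomial.C (b / c) * X + Polynomial.C (a / c))
            (Polynomial.C x + Polynomial.C y * X))
          = !![x + y * b * c⁻¹, y; -y * a * c⁻¹, x]) ∧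
      Function.Injective φ ∧
      ⇑φ '' {e | IsUnit e}
        = {A : Matrix (Fin 2) (Fin 2) F |
            A.det ≠ 0 ∧ Aᵀ * !![a, b / 2; b / 2, c] * A = A.det • !![a, b / 2; b / 2, c]} := by
  set f : F[X] := X ^ 2 - Polynomial.C (b / c) * X + Polynomial.C (a / c) with hf
  have hmonic : f.Monic := by unfold f; monicity!
  have hdegf : f.degree = 2 := by unfold f; compute_degree!
  set M : Matrix (Fin 2) (Fin 2) F := !![b / c, 1; -(a / c), 0] with hM
  have hroot : (Polynomial.aeval M) f = 0 := by
    simp only [hf, map_add, map_sub, _root_.map_mul, map_pow, aeval_X, aeval_C]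
    ext i j
    fin_cases i <;> fin_cases j <;>
      simp [hM, Matrix.mul_apply, Fin.sum_univ_succ, Matrix.algebraMap_matrix_apply,
        pow_two] <;> ring
  set φ : AdjoinRoot f →ₐ[F] Matrix (Fin 2) (Fin 2) F :=
    Ideal.Quotient.liftₐ _ (Polynomial.aeval M) (by
      intro g hg
      rw [Ideal.mem_span_singleton] at hg
      obtain ⟨q, rfl⟩ := hg
      rw [_root_.map_mul, hroot, zero_mul]) with hφ
  have hmk : ∀ g : F[X], φ (AdjoinRoot.mk f g) = Polynomial.aeval M g := by
    intro g
    rw [hφ]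
    exact (Ideal.Quotient.liftₐ_apply _ _ _ _).trans (Ideal.Quotient.lift_mk _ _ _)
  have hmap : ∀ x y : F, φ (AdjoinRoot.mk f (Polynomial.C x + Polynomial.C y * X))
      = !![x + y * b * c⁻¹, y; -y * a * c⁻¹, x] := by
    intro x y
    rw [hmk]
    simp only [map_add, _root_.map_mul, aeval_X, aeval_C]
    ext i j
    fin_cases i <;> fin_cases j <;>
      simp [hM, Matrix.algebraMap_matrix_apply, Matrix.mul_apply, Fin.sum_univ_succ] <;>
      field_simp
  have rep : ∀ z : AdjoinRoot f, ∃ x y : F,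
      z = AdjoinRoot.mk f (Polynomial.C x + Polynomial.C y * X) := by
    intro z
    obtain ⟨g, rfl⟩ := AdjoinRoot.mk_surjective z
    refine ⟨(g %ₘ f).coeff 0, (g %ₘ f).coeff 1, ?_⟩
    have h1 : g %ₘ f + f * (g /ₘ f) = g := Polynomial.modByMonic_add_div g f
    have hdlt : (g %ₘ f).degree < 2 := hdegf ▸ Polynomial.degree_modByMonic_lt g hmonic
    have hle : (g %ₘ f).degree ≤ 1 := Order.le_of_lt_succ hdlt
    have heq : g %ₘ f = Polynomial.C ((g %ₘ f).coeff 1) * X + Polynomial.C ((g %ₘ f).coeff 0) :=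
      Polynomial.eq_X_add_C_of_degree_le_one hle
    conv_lhs => rw [← h1, heq]
    rw [map_add, _root_.map_mul, AdjoinRoot.mk_self, zero_mul, add_zero]
    exact congrArg _ (add_comm _ _)
  have hinj : Function.Injective φ := by
    rw [injective_iff_map_eq_zero]
    intro z hz
    obtain ⟨x, y, rfl⟩ := rep z
    rw [hmap] at hz
    have hy : y = 0 := by simpa using congrFun (congrFun hz 0) 1
    have hx : x = 0 := by simpa using congrFun (congrFun hz 1) 1
    rw [hx, hy]
    simp
  -- the conjugation / norm identity
  have hconj : ∀ x y : F,
      (AdjoinRoot.mk f (Polynomial.C x + Polynomial.C y * X))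
        * (AdjoinRoot.mk f (Polynomial.C (x + y * (b / c)) + Polynomial.C (-y) * X))
      = algebraMap F _ (x ^ 2 + x * y * (b / c) + y ^ 2 * (a / c)) := by
    intro x y
    rw [← _root_.map_mul]
    have hpoly : (Polynomial.C x + Polynomial.C y * X)
        * (Polynomial.C (x + y * (b / c)) + Polynomial.C (-y) * X)
        = Polynomial.C (x ^ 2 + x * y * (b / c) + y ^ 2 * (a / c))
            + Polynomial.C (-(y ^ 2)) * f := by
      simp only [hf, map_add, _root_.map_mul, map_pow, map_neg, map_ofNat]
      ring
    rw [hpoly, map_add, _root_.map_mul, AdjoinRoot.mk_self, mul_zero, add_zero,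
      AdjoinRoot.mk_C]
    rfl
  have h4 : (4 : F) ≠ 0 := by
    intro h
    apply h2
    have h22 : (2 : F) * 2 = 4 := by norm_num
    rcases mul_eq_zero.mp (h22.trans h) with h0 | h0 <;> exact h0
  set S : Matrix (Fin 2) (Fin 2) F := !![a, b / 2; b / 2, c] with hS
  have hsim : ∀ x y : F,
      (!![x + y * b * c⁻¹, y; -y * a * c⁻¹, x])ᵀ * S * !![x + y * b * c⁻¹, y; -y * a * c⁻¹, x]
        = (!![x + y * b * c⁻¹, y; -y * a * c⁻¹, x]).det • S := by
    intro x y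
    ext i j
    fin_cases i <;> fin_cases j <;>
      simp [hS, Matrix.mul_apply, Fin.sum_univ_succ, Matrix.det_fin_two_of,
        Matrix.smul_apply, Matrix.transpose_apply, smul_eq_mul] <;>
      (try field_simp) <;> (try ring_nf) <;> (try field_simp) <;> (try ring)
  have himg : ⇑φ '' {e | IsUnit e}
      = {A : Matrix (Fin 2) (Fin 2) F | A.det ≠ 0 ∧ Aᵀ * S * A = A.det • S} := by
    ext A
    constructor
    · rintro ⟨e, he, rfl⟩
      refine ⟨?_, ?_⟩
      · exact fun h => by
          simpa [h] using (Matrix.isUnit_iff_isUnit_det _).mp (he.map φ)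
      · obtain ⟨x, y, rfl⟩ := rep e
        rw [hmap]
        exact hsim x y
    · rintro ⟨hdet, hsimA⟩
      have h1 := congrFun (congrFun hsimA 1) 1
      have h2' := congrFun (congrFun hsimA 0) 1
      simp [hS, Matrix.mul_apply, Fin.sum_univ_succ, Matrix.smul_apply,
        Matrix.transpose_apply, smul_eq_mul, Matrix.det_fin_two] at h1 h2'
      field_simp at h1 h2'
      have hD : A 0 0 * A 1 1 - A 0 1 * A 1 0 ≠ 0 := by
        rwa [Matrix.det_fin_two] at hdet
      have hD2 : (A 0 0 * A 1 1 - A 0 1 * A 1 0) * 2 ≠ 0 := mul_ne_zero hD h2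
      have hu : c * A 0 0 - c * A 1 1 - b * A 0 1 = 0 := by
        have h : (c * A 0 0 - c * A 1 1 - b * A 0 1)
            * ((A 0 0 * A 1 1 - A 0 1 * A 1 0) * 2) = 0 := by
          linear_combination (-(A 0 0)) * h1 + (A 0 1) * h2'
        exact (mul_eq_zero.mp h).resolve_right hD2
      have hv : c * A 1 0 + a * A 0 1 = 0 := by
        have h : (c * A 1 0 + a * A 0 1)
            * ((A 0 0 * A 1 1 - A 0 1 * A 1 0) * 2) = 0 := by
          linear_combination (-(A 1 0)) * h1 + (A 1 1) * h2'
        exact (mul_eq_zero.mp h).resolve_right hD2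
      have hAeq : !![A 1 1 + A 0 1 * b * c⁻¹, A 0 1; -(A 0 1) * a * c⁻¹, A 1 1] = A := by
        conv_rhs => rw [Matrix.eta_fin_two A]
        ext i j
        fin_cases i <;> fin_cases j <;> simp
        · field_simp
          linear_combination -hu
        · field_simp
          linear_combination -hv
      -- norm is the determinant, hence nonzero, hence a unit
      have hN : A 1 1 ^ 2 + A 1 1 * A 0 1 * (b / c) + A 0 1 ^ 2 * (a / c)
          = A 0 0 * A 1 1 - A 0 1 * A 1 0 := by
        field_simp
        linear_combination -(A 1 1) * hu + A 0 1 * hv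
      refine ⟨AdjoinRoot.mk f (Polynomial.C (A 1 1) + Polynomial.C (A 0 1) * X), ?_, ?_⟩
      · have hNne : A 1 1 ^ 2 + A 1 1 * A 0 1 * (b / c) + A 0 1 ^ 2 * (a / c) ≠ 0 :=
          hN ▸ hD
        refine IsUnit.of_mul_eq_one
          ((AdjoinRoot.mk f (Polynomial.C (A 1 1 + A 0 1 * (b / c)) + Polynomial.C (-(A 0 1)) * X))
            * algebraMap F _ (A 1 1 ^ 2 + A 1 1 * A 0 1 * (b / c) + A 0 1 ^ 2 * (a / c))⁻¹) ?_
        rw [← mul_assoc, hconj, ← _root_.map_mul, mul_inv_cancel₀ hNne, _root_.map_one]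
      · rw [hmap]
        exact hAeq
  exact ⟨φ, hmap, hinj, himg⟩
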